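/- Let I be a polymatroidal ideal in R = K[x_1,...,x_n] with associated primes Ass(I) = {p_1,...,p_t} (each p_i a monomial prime, i.e., generated by variables). Then there exist integers a_i ≥ 0 such that I = ⋂_{i=1}^t p_i^{a_i}; that is, the p_i-primary components of I are powers of the p_i. -/

import Mathlib

noncomputable section
open MvPolynomial

variable (K : Type*) [Field K] (n : ℕ)

/-- Total degree of an exponent vector. -/
def expDeg (m : Fin n →₀ ℕ) : ℕ := m.sum fun _ e => e

/-- The minimal monomial generators of a monomial ideal, encoded by their
exponent vectors: monomials in `I` that are minimal under divisibility. -/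
def minGens (I : Ideal (MvPolynomial (Fin n) K)) : Set (Fin n →₀ ℕ) :=
  {m | (monomial m (1 : K)) ∈ I ∧
    ∀ m' : Fin n →₀ ℕ, (monomial m' (1 : K)) ∈ I → m' ≤ m → m' = m}

/-- A monomial ideal: an ideal generated by monomials. -/
def IsMonomialIdeal (I : Ideal (MvPolynomial (Fin n) K)) : Prop :=
  ∃ S : Set (Fin n →₀ ℕ), I = Ideal.span ((fun m => monomial m (1 : K)) '' S)

/-- A polymatroidal ideal of degree `d`: a monomial ideal all of whose minimal
generators have degree `d`, satisfying the exchange property. -/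
def IsPolymatroidal (I : Ideal (MvPolynomial (Fin n) K)) (d : ℕ) : Prop :=
  IsMonomialIdeal K n I ∧
  (∀ m ∈ minGens K n I, expDeg n m = d) ∧
  (∀ u ∈ minGens K n I, ∀ v ∈ minGens K n I, ∀ i : Fin n, v i < u i →
    ∃ j : Fin n, u j < v j ∧
      (u - Finsupp.single i 1 + Finsupp.single j 1) ∈ minGens K n I)

/-- A matroidal ideal: a squarefree polymatroidal ideal. -/
def IsMatroidal (I : Ideal (MvPolynomial (Fin n) K)) (d : ℕ) : Prop :=
  IsPolymatroidal K n I d ∧ ∀ m ∈ minGens K n I, ∀ i, m i ≤ 1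

/-- The support of a monomial ideal: variables dividing some minimal generator. -/
def suppI (I : Ideal (MvPolynomial (Fin n) K)) : Set (Fin n) :=
  {i | ∃ m ∈ minGens K n I, m i ≠ 0}

/-- The colon ideal `(I : x_i)`. -/
def colonVar (I : Ideal (MvPolynomial (Fin n) K)) (i : Fin n) :
    Ideal (MvPolynomial (Fin n) K) :=
  Submodule.colon I ((Ideal.span {X i} : Ideal (MvPolynomial (Fin n) K)) : Set (MvPolynomial (Fin n) K))

/-- The height of an ideal: infimum of heights of primes containing it. -/
def htIdeal (I : Ideal (MvPolynomial (Fin n) K)) : ℕ∞ :=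
  ⨅ (p : PrimeSpectrum (MvPolynomial (Fin n) K)) (_ : I ≤ p.asIdeal),
    Order.height p

/-- An ideal is unmixed if all associated primes of `R/I` have the same height. -/
def IsUnmixed (I : Ideal (MvPolynomial (Fin n) K)) : Prop :=
  ∀ p ∈ associatedPrimes (MvPolynomial (Fin n) K) (MvPolynomial (Fin n) K ⧸ I),
  ∀ q ∈ associatedPrimes (MvPolynomial (Fin n) K) (MvPolynomial (Fin n) K ⧸ I),
    htIdeal K n p = htIdeal K n q

/-- The graded maximal ideal `(x_1, …, x_n)`. -/
def maxIdeal : Ideal (MvPolynomial (Fin n) K) :=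
  Ideal.span (Set.range (X : Fin n → MvPolynomial (Fin n) K))

/-- The monomial prime ideal generated by the variables in `s`. -/
def primeOf (s : Finset (Fin n)) : Ideal (MvPolynomial (Fin n) K) :=
  Ideal.span ((fun i => (X i : MvPolynomial (Fin n) K)) '' s)

/-- The squarefree Veronese ideal of degree `d`. -/
def sqVeronese (d : ℕ) : Ideal (MvPolynomial (Fin n) K) :=
  Ideal.span {f | ∃ e : Finset (Fin n), e.card = d ∧ f = ∏ i ∈ e, X i}

/-- The variables belonging to an ideal (the variable generators of a
monomial prime). -/
def varsOf (p : Ideal (MvPolynomial (Fin n) K)) : Set (Fin n) :=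
  {i | (X i : MvPolynomial (Fin n) K) ∈ p}

/-- `I` is connected in codimension one: any two distinct minimal primes are
linked by a chain of minimal primes in which consecutive primes generate an
ideal on `height I + 1` variables. -/
def ConnCodimOne (I : Ideal (MvPolynomial (Fin n) K)) : Prop :=
  ∀ p ∈ I.minimalPrimes, ∀ q ∈ I.minimalPrimes, p ≠ q →
    ∃ (r : ℕ) (c : Fin (r + 1) → Ideal (MvPolynomial (Fin n) K)),
      (∀ i, c i ∈ I.minimalPrimes) ∧ c 0 = p ∧ c (Fin.last r) = q ∧
      ∀ i : Fin r,
        ((varsOf K n (c i.castSucc ⊔ c i.succ)).ncard : ℕ∞) = htIdeal K n I + 1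

/-- `R/I` is Cohen–Macaulay: there is a regular sequence on `R/I` inside the
graded maximal ideal whose length equals the Krull dimension of `R/I`. -/
def QuotientCM (I : Ideal (MvPolynomial (Fin n) K)) : Prop :=
  ∃ rs : List (MvPolynomial (Fin n) K),
    (∀ r ∈ rs, r ∈ maxIdeal K n) ∧
    RingTheory.Sequence.IsRegular (MvPolynomial (Fin n) K ⧸ I) rs ∧
    ((rs.length : ℕ∞) : WithBot ℕ∞) = ringKrullDim (MvPolynomial (Fin n) K ⧸ I)

/-! ### Auxiliary lemmas for stmt10 -/

section Stmt10Aux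

theorem aux_core {n : ℕ} {G : Set (Fin n →₀ ℕ)}
    (hex : ∀ u ∈ G, ∀ v ∈ G, ∀ i : Fin n, v i < u i →
      ∃ j : Fin n, u j < v j ∧ (u - Finsupp.single i 1 + Finsupp.single j 1) ∈ G)
    (s : Finset (Fin n)) (c : Fin n →₀ ℕ) (a : ℕ)
    (hmin : ∀ u ∈ G, a ≤ ∑ j ∈ s, u j)
    (hatt : ∃ u ∈ G, ∑ j ∈ s, u j = a)
    (hac : a ≤ ∑ j ∈ s, c j)
    (hwit : ∀ i ∈ s, ∃ w ∈ G, ∀ j, w j ≤ c j + Finsupp.single i 1 j) :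
    ∃ u ∈ G, ∀ j ∈ s, u j ≤ c j := by
  classical
  by_contra hcon
  push_neg at hcon
  set Pv : Set ℕ :=
    {k | ∃ u, (u ∈ G ∧ ∑ j ∈ s, u j = a) ∧ ∑ j ∈ s, (u j - c j) = k} with hPv
  have hTne : Pv.Nonempty := by
    obtain ⟨u, huG, hua⟩ := hatt
    exact ⟨_, u, ⟨huG, hua⟩, rfl⟩
  obtain ⟨u, ⟨huG, hua⟩, hPu⟩ := Nat.sInf_mem hTne
  obtain ⟨i, his, hci⟩ := hcon u huG
  have hdef : ∃ k ∈ s, u k < c k := by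
    by_contra h
    push_neg at h
    have h1 : ∑ j ∈ s, c j < ∑ j ∈ s, u j :=
      Finset.sum_lt_sum h ⟨i, his, hci⟩
    omega
  obtain ⟨k, hks, hkc⟩ := hdef
  have hik : i ≠ k := by rintro rfl; omega
  obtain ⟨w, hwG, hw⟩ := hwit k hks
  have hwi : w i < u i := by
    have h1 := hw i
    rw [Finsupp.single_apply, if_neg (Ne.symm hik)] at h1
    omega
  obtain ⟨j, huwj, hu'G⟩ := hex u huG w hwG i hwi
  have hji : j ≠ i := by rintro rfl; omega
  have hui : 1 ≤ u i := by omega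
  set u' : Fin n →₀ ℕ := u - Finsupp.single i 1 + Finsupp.single j 1 with hu'
  have happ : ∀ t, u' t = u t - (if i = t then 1 else 0) + (if j = t then 1 else 0) := by
    intro t
    rw [hu', Finsupp.add_apply, Finsupp.tsub_apply, Finsupp.single_apply, Finsupp.single_apply]
  have hwj : w j ≤ c j + (if k = j then 1 else 0) := by
    have := hw j; rwa [Finsupp.single_apply] at this
  have hkey : ∀ t, u' t + (if i = t then 1 else 0) = u t + (if j = t then 1 else 0) := by
    intro t
    have h0 := happ t
    by_cases h1 : i = t <;> by_cases h2 : j = t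
    · exact absurd (h2.trans h1.symm) hji
    · subst h1
      rw [if_pos rfl, if_neg h2] at h0 ⊢
      omega
    · subst h2
      rw [if_neg h1, if_pos rfl] at h0 ⊢
      omega
    · rw [if_neg h1, if_neg h2] at h0 ⊢
      omega
  by_cases hjs : j ∈ s
  · have hsum' : ∑ t ∈ s, u' t = a := by
      have h2 : ∑ t ∈ s, (u' t + (if i = t then 1 else 0))
          = ∑ t ∈ s, (u t + (if j = t then 1 else 0)) :=
        Finset.sum_congr rfl fun t _ => hkey t
      rw [Finset.sum_add_distrib, Finset.sum_add_distrib,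
        Finset.sum_ite_eq s i fun _ => 1, Finset.sum_ite_eq s j fun _ => 1,
        if_pos his, if_pos hjs] at h2
      omega
    have hu'j : u' j ≤ c j := by
      have h0 := happ j
      rw [if_neg (fun h => hji h.symm), if_pos rfl] at h0
      by_cases hjk : k = j
      · subst hjk; omega
      · rw [if_neg hjk] at hwj; omega
    have hPkey : ∀ t ∈ s, (u' t - c t) + (if i = t then 1 else 0) = u t - c t := by
      intro t _
      have h0 := happ t
      by_cases h1 : i = t <;> by_cases h2 : j = t
      · exact absurd (h2.trans h1.symm) hji
      · subst h1
        rw [if_pos rfl, if_neg h2] at h0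
        rw [if_pos rfl]
        omega
      · subst h2
        rw [if_neg h1, if_pos rfl] at h0
        rw [if_neg h1]
        omega
      · rw [if_neg h1, if_neg h2] at h0
        rw [if_neg h1]
        omega
    have hPsum : (∑ t ∈ s, (u' t - c t)) + 1 = ∑ t ∈ s, (u t - c t) := by
      have h2 : ∑ t ∈ s, ((u' t - c t) + (if i = t then 1 else 0))
          = ∑ t ∈ s, (u t - c t) := Finset.sum_congr rfl hPkey
      rw [Finset.sum_add_distrib, Finset.sum_ite_eq s i fun _ => 1, if_pos his] at h2
      omega
    have hle : sInf Pv ≤ ∑ t ∈ s, (u' t - c t) :=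
      Nat.sInf_le ⟨u', ⟨hu'G, hsum'⟩, rfl⟩
    omega
  · have hsum' : (∑ t ∈ s, u' t) + 1 = a := by
      have h2 : ∑ t ∈ s, (u' t + (if i = t then 1 else 0))
          = ∑ t ∈ s, (u t + (if j = t then 1 else 0)) :=
        Finset.sum_congr rfl fun t _ => hkey t
      rw [Finset.sum_add_distrib, Finset.sum_add_distrib,
        Finset.sum_ite_eq s i fun _ => 1, Finset.sum_ite_eq s j fun _ => 1,
        if_pos his, if_neg hjs] at h2
      omega
    have := hmin u' hu'G
    omega


/-- The "monomial closure" ideal used to characterize membership in monomial spans. -/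
def auxJ (S : Set (Fin n →₀ ℕ)) : Ideal (MvPolynomial (Fin n) K) where
  carrier := {g | ∀ w ∈ g.support, ∃ m ∈ S, m ≤ w}
  add_mem' := by
    classical
    intro a b ha hb w hw
    rcases Finset.mem_union.mp (MvPolynomial.support_add hw) with h | h
    exacts [ha w h, hb w h]
  zero_mem' := by intro w hw; simp at hw
  smul_mem' := by
    classical
    intro c x hx w hw
    rw [smul_eq_mul] at hw
    have h2 := MvPolynomial.support_mul c x hw
    rw [Finset.mem_add] at h2
    obtain ⟨w1, hw1, w2, hw2, rfl⟩ := h2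
    obtain ⟨m, hm, hle⟩ := hx w2 hw2
    exact ⟨m, hm, hle.trans le_add_self⟩

theorem aux_mem_span_iff (S : Set (Fin n →₀ ℕ)) (g : MvPolynomial (Fin n) K) :
    g ∈ Ideal.span ((fun m => monomial m (1 : K)) '' S) ↔
      ∀ w ∈ g.support, ∃ m ∈ S, m ≤ w := by
  constructor
  · intro hg
    refine (Ideal.span_le.mpr ?_ : _ ≤ auxJ K n S) hg
    rintro x ⟨m, hm, rfl⟩ w hw
    have hwm : m = w := by simpa [MvPolynomial.support_monomial] using hw
    exact ⟨m, hm, hwm.le⟩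
  · intro h
    rw [← MvPolynomial.support_sum_monomial_coeff g]
    apply Ideal.sum_mem
    intro w hw
    obtain ⟨m, hm, hle⟩ := h w hw
    have heq : (monomial w (MvPolynomial.coeff w g) : MvPolynomial (Fin n) K)
        = monomial (w - m) (MvPolynomial.coeff w g) * monomial m 1 := by
      rw [MvPolynomial.monomial_mul, mul_one, tsub_add_cancel_of_le hle]
    rw [heq]
    exact Ideal.mul_mem_left _ _ (Ideal.subset_span ⟨m, hm, rfl⟩)

theorem aux_mono_mem_span (S : Set (Fin n →₀ ℕ)) (w : Fin n →₀ ℕ) :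
    (monomial w (1 : K)) ∈ Ideal.span ((fun m => monomial m (1 : K)) '' S) ↔
      ∃ m ∈ S, m ≤ w := by
  rw [aux_mem_span_iff]
  constructor
  · intro h
    exact h w (by simp [MvPolynomial.support_monomial])
  · intro h w' hw'
    have hww : w = w' := by simpa [MvPolynomial.support_monomial] using hw'
    exact hww ▸ h

theorem aux_dvd_mem (I : Ideal (MvPolynomial (Fin n) K)) {u w : Fin n →₀ ℕ}
    (h : monomial u (1 : K) ∈ I) (hle : u ≤ w) : monomial w (1 : K) ∈ I := by
  have heq : (monomial w (1 : K) : MvPolynomial (Fin n) K)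
      = monomial (w - u) 1 * monomial u 1 := by
    rw [MvPolynomial.monomial_mul, tsub_add_cancel_of_le hle, mul_one]
  rw [heq]
  exact Ideal.mul_mem_left _ _ h

theorem aux_expDeg_eq_sum (m : Fin n →₀ ℕ) : expDeg n m = ∑ j, m j := by
  rw [show expDeg n m = ∑ j ∈ m.support, m j from rfl]
  exact Finset.sum_subset (Finset.subset_univ _)
    (fun x _ hx => Finsupp.notMem_support_iff.mp hx)

theorem aux_le_expDeg (s : Finset (Fin n)) (m : Fin n →₀ ℕ) :
    ∑ j ∈ s, m j ≤ expDeg n m := by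
  rw [aux_expDeg_eq_sum]
  exact Finset.sum_le_sum_of_subset (Finset.subset_univ s)

theorem aux_eq_of_le {m' m : Fin n →₀ ℕ} (h : m' ≤ m) (hd : expDeg n m ≤ expDeg n m') :
    m' = m := by
  rw [aux_expDeg_eq_sum, aux_expDeg_eq_sum] at hd
  ext i
  by_contra hne
  have h2 : m' i < m i := lt_of_le_of_ne (Finsupp.le_def.mp h i) hne
  have h3 : ∑ j, m' j < ∑ j, m j :=
    Finset.sum_lt_sum (fun j _ => Finsupp.le_def.mp h j) ⟨i, Finset.mem_univ i, h2⟩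
  omega

theorem aux_exists_minGen_le (I : Ideal (MvPolynomial (Fin n) K)) {m : Fin n →₀ ℕ}
    (h : monomial m (1 : K) ∈ I) : ∃ u ∈ minGens K n I, u ≤ m := by
  have hTne : {k | ∃ m', (monomial m' (1 : K) ∈ I ∧ m' ≤ m) ∧ expDeg n m' = k}.Nonempty :=
    ⟨_, m, ⟨h, le_rfl⟩, rfl⟩
  obtain ⟨u, ⟨huI, hum⟩, hud⟩ := Nat.sInf_mem hTne
  refine ⟨u, ⟨huI, ?_⟩, hum⟩
  intro m' hm' hle
  have hd : expDeg n u ≤ expDeg n m' := by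
    have h1 : sInf {k | ∃ m', (monomial m' (1 : K) ∈ I ∧ m' ≤ m) ∧ expDeg n m' = k}
        ≤ expDeg n m' := Nat.sInf_le ⟨m', ⟨hm', hle.trans hum⟩, rfl⟩
    omega
  exact aux_eq_of_le n hle hd

theorem aux_mono_mem_iff (I : Ideal (MvPolynomial (Fin n) K)) (w : Fin n →₀ ℕ) :
    monomial w (1 : K) ∈ I ↔ ∃ u ∈ minGens K n I, u ≤ w := by
  constructor
  · exact fun h => aux_exists_minGen_le K n I h
  · rintro ⟨u, hu, hle⟩
    exact aux_dvd_mem K n I hu.1 hle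

theorem aux_supp_subset {I : Ideal (MvPolynomial (Fin n) K)} (hI : IsMonomialIdeal K n I)
    {g : MvPolynomial (Fin n) K} (hg : g ∈ I) :
    ∀ w ∈ g.support, ∃ u ∈ minGens K n I, u ≤ w := by
  obtain ⟨S, hS⟩ := hI
  intro w hw
  obtain ⟨m', hm', hle⟩ := (aux_mem_span_iff K n S g).mp (hS ▸ hg) w hw
  obtain ⟨u, hu, hle'⟩ := aux_exists_minGen_le K n I
    (show monomial m' (1 : K) ∈ I from hS ▸ Ideal.subset_span ⟨m', hm', rfl⟩)
  exact ⟨u, hu, hle'.trans hle⟩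

theorem aux_mem_of_supp (I : Ideal (MvPolynomial (Fin n) K)) {g : MvPolynomial (Fin n) K}
    (h : ∀ w ∈ g.support, monomial w (1 : K) ∈ I) : g ∈ I := by
  rw [← MvPolynomial.support_sum_monomial_coeff g]
  refine Ideal.sum_mem _ fun w hw => ?_
  rw [← mul_one (MvPolynomial.coeff w g), ← MvPolynomial.C_mul_monomial]
  exact Ideal.mul_mem_left _ _ (h w hw)

theorem aux_primeOf_eq (s : Finset (Fin n)) :
    primeOf K n s = Ideal.span
      ((fun m => monomial m (1 : K)) '' ((fun i => Finsupp.single i 1) '' ↑s)) := by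
  rw [primeOf, ← Set.image_comp]
  rfl

theorem aux_pow_primeOf (s : Finset (Fin n)) (k : ℕ) :
    (primeOf K n s) ^ k =
      Ideal.span ((fun m => monomial m (1 : K)) '' {m | k ≤ ∑ j ∈ s, m j}) := by
  induction k with
  | zero =>
    rw [pow_zero, Ideal.one_eq_top]
    symm
    rw [Ideal.eq_top_iff_one]
    exact Ideal.subset_span ⟨0, by simp, by simp⟩
  | succ k ih =>
    rw [pow_succ, ih, aux_primeOf_eq, Ideal.span_mul_span']
    apply le_antisymm
    · rw [Ideal.span_le]
      rintro x hx
      rw [Set.mem_mul] at hx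
      obtain ⟨x1, hx1, x2, hx2, rfl⟩ := hx
      obtain ⟨m1, hm1, rfl⟩ := hx1
      obtain ⟨m2, hm2, rfl⟩ := hx2
      obtain ⟨i, hi, rfl⟩ := hm2
      refine Ideal.subset_span ⟨m1 + Finsupp.single i 1, ?_, ?_⟩
      · have h1 : ∑ j ∈ s, Finsupp.single i (1 : ℕ) j = 1 := by
          rw [Finset.sum_congr rfl fun j _ => Finsupp.single_apply,
            Finset.sum_ite_eq s i fun _ => 1, if_pos (Finset.mem_coe.mp hi)]
        have h2 : (k : ℕ) ≤ ∑ j ∈ s, m1 j := hm1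
        simp only [Set.mem_setOf_eq, Finsupp.coe_add, Pi.add_apply, Finset.sum_add_distrib]
        omega
      · show (monomial (m1 + Finsupp.single i 1) (1 : K) : MvPolynomial (Fin n) K) = _
        rw [MvPolynomial.monomial_mul, one_mul]
    · rw [Ideal.span_le]
      rintro x ⟨m, hm, rfl⟩
      simp only [SetLike.mem_coe]
      have hm' : k + 1 ≤ ∑ j ∈ s, m j := hm
      have hex : ∃ i ∈ s, 1 ≤ m i := by
        by_contra h
        push_neg at h
        have : ∑ j ∈ s, m j = 0 := Finset.sum_eq_zero fun j hj => by
          have := h j hj; omega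
        omega
      obtain ⟨i, hi, hmi⟩ := hex
      have hle : Finsupp.single i 1 ≤ m := Finsupp.single_le_iff.mpr hmi
      have heq : (monomial m (1 : K) : MvPolynomial (Fin n) K)
          = monomial (m - Finsupp.single i 1) 1 * monomial (Finsupp.single i 1) 1 := by
        rw [MvPolynomial.monomial_mul, tsub_add_cancel_of_le hle, mul_one]
      rw [heq]
      refine Ideal.subset_span (Set.mul_mem_mul ⟨m - Finsupp.single i 1, ?_, rfl⟩
        ⟨Finsupp.single i 1, ⟨i, hi, rfl⟩, rfl⟩)
      have h1 : ∑ j ∈ s, Finsupp.single i (1 : ℕ) j = 1 := by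
        rw [Finset.sum_congr rfl fun j _ => Finsupp.single_apply,
          Finset.sum_ite_eq s i fun _ => 1, if_pos hi]
      simp only [Set.mem_setOf_eq]
      have h4 : ∀ j, (m - Finsupp.single i 1 : Fin n →₀ ℕ) j = m j - Finsupp.single i 1 j :=
        fun j => Finsupp.tsub_apply _ _ _
      rw [Finset.sum_congr rfl fun j _ => h4 j]
      have h6 : ∑ j ∈ s, (m j - Finsupp.single i (1 : ℕ) j)
          + ∑ j ∈ s, Finsupp.single i (1 : ℕ) j = ∑ j ∈ s, m j := by
        rw [← Finset.sum_add_distrib]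
        refine Finset.sum_congr rfl fun j _ => ?_
        have := Finsupp.le_def.mp hle j
        omega
      omega

theorem aux_mono_mem_pow (s : Finset (Fin n)) (k : ℕ) (z : Fin n →₀ ℕ) :
    (monomial z (1 : K)) ∈ (primeOf K n s) ^ k ↔ k ≤ ∑ j ∈ s, z j := by
  rw [aux_pow_primeOf, aux_mono_mem_span]
  constructor
  · rintro ⟨m, hm, hle⟩
    exact le_trans hm (Finset.sum_le_sum fun j _ => Finsupp.le_def.mp hle j)
  · intro h
    exact ⟨z, h, le_rfl⟩

theorem aux_primeOf_prime (s : Finset (Fin n)) : (primeOf K n s).IsPrime := by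
  classical
  set φ : MvPolynomial (Fin n) K →+* MvPolynomial (Fin n) K :=
    (MvPolynomial.aeval
      (fun i => if i ∈ s then 0 else MvPolynomial.X i : Fin n → MvPolynomial (Fin n) K)).toRingHom
    with hφ
  have hker : primeOf K n s = RingHom.ker φ := by
    apply le_antisymm
    · rw [primeOf, Ideal.span_le]
      rintro x ⟨i, hi, rfl⟩
      simp [RingHom.mem_ker, hφ, Finset.mem_coe.mp hi]
    · intro g hg
      have key : ∀ g : MvPolynomial (Fin n) K, g - φ g ∈ primeOf K n s := by
        intro g
        induction g using MvPolynomial.induction_on with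
        | C a => simp [hφ]
        | add p q hp hq =>
          have h2 := Ideal.add_mem _ hp hq
          convert h2 using 1
          simp only [map_add]
          ring
        | mul_X p i hp =>
          by_cases hi : i ∈ s
          · have hX : MvPolynomial.X i ∈ primeOf K n s := Ideal.subset_span ⟨i, hi, rfl⟩
            have h0 : φ (p * MvPolynomial.X i) = 0 := by simp [hφ, hi]
            rw [h0, sub_zero]
            exact Ideal.mul_mem_left _ _ hX
          · have h0 : φ (p * MvPolynomial.X i) = φ p * MvPolynomial.X i := by
              simp [hφ, hi]
            rw [h0, ← sub_mul]
            exact Ideal.mul_mem_right _ _ hp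
      have h1 := key g
      rw [RingHom.mem_ker] at hg
      rwa [hg, sub_zero] at h1
  rw [hker]
  exact RingHom.ker_isPrime φ

theorem aux_primeOf_inj {s t : Finset (Fin n)} (h : primeOf K n s = primeOf K n t) :
    s = t := by
  have key : ∀ s t : Finset (Fin n), primeOf K n s ≤ primeOf K n t → s ⊆ t := by
    intro s t hst i hi
    have h1 : MvPolynomial.X i ∈ primeOf K n t := hst (Ideal.subset_span ⟨i, hi, rfl⟩)
    rw [aux_primeOf_eq,
      show (MvPolynomial.X i : MvPolynomial (Fin n) K) = monomial (Finsupp.single i 1) 1 from rfl,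
      aux_mono_mem_span] at h1
    obtain ⟨m, hm, hle⟩ := h1
    obtain ⟨j, hj, rfl⟩ := hm
    have h2 := Finsupp.le_def.mp hle j
    rw [Finsupp.single_apply, Finsupp.single_apply, if_pos rfl] at h2
    by_cases hij : i = j
    · exact hij ▸ hj
    · rw [if_neg hij] at h2
      omega
  exact Finset.Subset.antisymm (key s t h.le) (key t s h.ge)

theorem aux_assoc (I : Ideal (MvPolynomial (Fin n) K)) (z : Fin n →₀ ℕ) (s : Finset (Fin n))
    (h : ∀ r, r * monomial z (1 : K) ∈ I ↔ r ∈ primeOf K n s) :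
    primeOf K n s ∈ associatedPrimes (MvPolynomial (Fin n) K) (MvPolynomial (Fin n) K ⧸ I) := by
  refine ⟨aux_primeOf_prime K n s,
    Ideal.Quotient.mkₐ (MvPolynomial (Fin n) K) I (monomial z 1), ?_⟩
  ext r
  rw [show (⊥ : Submodule (MvPolynomial (Fin n) K) (MvPolynomial (Fin n) K ⧸ I)).colon
      {Ideal.Quotient.mkₐ (MvPolynomial (Fin n) K) I (monomial z 1)} = primeOf K n s from
    Ideal.ext fun r => by
      rw [Submodule.mem_colon_singleton, Submodule.mem_bot, ← map_smul, smul_eq_mul,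
        Ideal.Quotient.mkₐ_eq_mk, Ideal.Quotient.eq_zero_iff_mem]
      exact h r,
    (aux_primeOf_prime K n s).radical]

theorem aux_claimM (I : Ideal (MvPolynomial (Fin n) K)) (d : ℕ)
    (hI : IsPolymatroidal K n I d) (hGne : (minGens K n I).Nonempty)
    (z : Fin n →₀ ℕ)
    (hz : ∀ s : Finset (Fin n),
      primeOf K n s ∈ associatedPrimes (MvPolynomial (Fin n) K)
        (MvPolynomial (Fin n) K ⧸ I) →
      sInf ((fun u => ∑ j ∈ s, u j) '' minGens K n I) ≤ ∑ j ∈ s, z j) :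
    monomial z (1 : K) ∈ I := by
  classical
  by_contra hzI
  set A : Finset (Fin n) → ℕ :=
    fun s => sInf ((fun u => ∑ j ∈ s, u j) '' minGens K n I) with hA
  have hAmem : ∀ s : Finset (Fin n),
      ∃ u ∈ minGens K n I, ∑ j ∈ s, u j = A s := by
    intro s
    obtain ⟨u, hu, hval⟩ := Nat.sInf_mem (hGne.image (fun u => ∑ j ∈ s, u j))
    exact ⟨u, hu, hval⟩
  have hAle : ∀ s : Finset (Fin n), ∀ u ∈ minGens K n I, A s ≤ ∑ j ∈ s, u j :=
    fun s u hu => Nat.sInf_le ⟨u, hu, rfl⟩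
  have hcoord : ∀ u ∈ minGens K n I, ∀ i, u i ≤ d := by
    intro u hu i
    have h1 : ∑ j ∈ ({i} : Finset (Fin n)), u j ≤ expDeg n u := aux_le_expDeg n _ u
    rw [Finset.sum_singleton, hI.2.1 u hu] at h1
    exact h1
  set dv : Fin n →₀ ℕ := Finsupp.equivFunOnFinite.symm (fun _ => d) with hdv
  have hdva : ∀ i, dv i = d := by intro i; rw [hdv]; simp
  set CE : Set (Fin n →₀ ℕ) :=
    {z' | z' ≤ dv ∧ (∀ s : Finset (Fin n),
        primeOf K n s ∈ associatedPrimes (MvPolynomial (Fin n) K)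
          (MvPolynomial (Fin n) K ⧸ I) → A s ≤ ∑ j ∈ s, z' j) ∧
      (monomial z' (1 : K)) ∉ I} with hCE
  set z1 : Fin n →₀ ℕ := Finsupp.zipWith min (min_self 0) z dv with hz1
  have hz1a : ∀ i, z1 i = min (z i) d := by
    intro i; rw [hz1, Finsupp.zipWith_apply, hdva]
  have hz1le : z1 ≤ z := Finsupp.le_def.mpr fun i => by rw [hz1a]; exact min_le_left _ _
  have hz1CE : z1 ∈ CE := by
    refine ⟨Finsupp.le_def.mpr fun i => by rw [hz1a, hdva]; exact min_le_right _ _, ?_, ?_⟩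
    · intro s hs
      by_cases hcase : ∀ i ∈ s, z i < d
      · have he : ∑ j ∈ s, z1 j = ∑ j ∈ s, z j :=
          Finset.sum_congr rfl fun j hj => by rw [hz1a]; have := hcase j hj; omega
        rw [he]; exact hz s hs
      · push_neg at hcase
        obtain ⟨i, hi, hd2⟩ := hcase
        obtain ⟨u0, hu0G, hu0⟩ := hAmem s
        have hAd : A s ≤ d := by
          calc A s = ∑ j ∈ s, u0 j := hu0.symm
            _ ≤ expDeg n u0 := aux_le_expDeg n s u0
            _ = d := hI.2.1 u0 hu0G
        have h5 : z1 i = d := by rw [hz1a]; omega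
        have h6 : d ≤ ∑ j ∈ s, z1 j := by
          rw [← h5]; exact Finset.single_le_sum (fun _ _ => Nat.zero_le _) hi
        omega
    · intro hmem
      obtain ⟨u, huG, hule⟩ := aux_exists_minGen_le K n I hmem
      exact hzI (aux_dvd_mem K n I huG.1 (hule.trans hz1le))
  have hne : (expDeg n '' CE).Nonempty := ⟨_, z1, hz1CE, rfl⟩
  have hbdd : BddAbove (expDeg n '' CE) := by
    refine ⟨n * d, ?_⟩
    rintro x ⟨z', hz', rfl⟩
    rw [aux_expDeg_eq_sum]
    calc ∑ j, z' j ≤ ∑ _j : Fin n, d := Finset.sum_le_sum fun j _ => by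
          have := Finsupp.le_def.mp hz'.1 j; rw [hdva] at this; exact this
      _ = n * d := by simp [Finset.sum_const, Finset.card_univ, mul_comm]
  obtain ⟨zs, hzsCE, hzsdeg⟩ := Nat.sSup_mem hne hbdd
  have hmax : ∀ z' ∈ CE, expDeg n z' ≤ expDeg n zs := fun z' h => by
    rw [hzsdeg]; exact le_csSup hbdd ⟨z', h, rfl⟩
  set s' : Finset (Fin n) := Finset.univ.filter (fun i => zs i < d) with hs'
  have hmem_s' : ∀ i, i ∈ s' ↔ zs i < d := by
    intro i; rw [hs', Finset.mem_filter]; simp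
  have hoffd : ∀ i, i ∉ s' → zs i = d := by
    intro i hi
    have h1 := Finsupp.le_def.mp hzsCE.1 i
    rw [hdva] at h1
    have h2 : ¬ zs i < d := fun hh => hi ((hmem_s' i).mpr hh)
    omega
  have hs'ne : s'.Nonempty := by
    rw [Finset.nonempty_iff_ne_empty]
    intro hemp
    obtain ⟨u0, hu0⟩ := hGne
    have hle : u0 ≤ zs := Finsupp.le_def.mpr fun i => by
      rw [hoffd i (by rw [hemp]; exact Finset.notMem_empty i)]
      exact hcoord u0 hu0 i
    exact hzsCE.2.2 (aux_dvd_mem K n I hu0.1 hle)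
  have hplus : ∀ i ∈ s', monomial (zs + Finsupp.single i 1) (1 : K) ∈ I := by
    intro i hi
    by_contra hnot
    have hzi : zs i < d := (hmem_s' i).mp hi
    have hCE2 : zs + Finsupp.single i 1 ∈ CE := by
      refine ⟨?_, ?_, hnot⟩
      · refine Finsupp.le_def.mpr fun j => ?_
        rw [show ((zs + Finsupp.single i 1 : Fin n →₀ ℕ)) j
            = zs j + Finsupp.single i 1 j from Finsupp.add_apply _ _ _, hdva,
          Finsupp.single_apply]
        by_cases hij : i = j
        · subst hij; rw [if_pos rfl]; omega
        · rw [if_neg hij]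
          have := Finsupp.le_def.mp hzsCE.1 j
          rw [hdva] at this
          omega
      · intro s hs
        have h0 := hzsCE.2.1 s hs
        have h1 : ∑ j ∈ s, zs j ≤ ∑ j ∈ s, (zs + Finsupp.single i 1 : Fin n →₀ ℕ) j :=
          Finset.sum_le_sum fun j _ => by
            rw [show ((zs + Finsupp.single i 1 : Fin n →₀ ℕ)) j
              = zs j + Finsupp.single i 1 j from Finsupp.add_apply _ _ _]
            omega
        omega
    have h2 := hmax _ hCE2
    have hdeg : expDeg n (zs + Finsupp.single i 1) = expDeg n zs + 1 := by
      rw [aux_expDeg_eq_sum, aux_expDeg_eq_sum]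
      have h7 : ∑ j, (zs + Finsupp.single i 1 : Fin n →₀ ℕ) j
          = ∑ j, zs j + ∑ j, Finsupp.single i (1 : ℕ) j := by
        rw [← Finset.sum_add_distrib]
        exact Finset.sum_congr rfl fun j _ => Finsupp.add_apply _ _ _
      have h8 : ∑ j, Finsupp.single i (1 : ℕ) j = 1 := by
        rw [Finset.sum_congr rfl fun j _ => Finsupp.single_apply,
          Finset.sum_ite_eq Finset.univ i fun _ => 1, if_pos (Finset.mem_univ i)]
      omega
    omega
  have hoff : ∀ y : Fin n →₀ ℕ, (∀ i ∈ s', y i = 0) →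
      monomial (zs + y) (1 : K) ∉ I := by
    intro y hy hmem
    obtain ⟨u, huG, hule⟩ := aux_exists_minGen_le K n I hmem
    have hle2 : u ≤ zs := Finsupp.le_def.mpr fun i => by
      by_cases hi : i ∈ s'
      · have h1 : u i ≤ zs i + y i := by
          have := Finsupp.le_def.mp hule i
          rwa [show ((zs + y : Fin n →₀ ℕ)) i = zs i + y i from Finsupp.add_apply _ _ _]
            at this
        rw [hy i hi] at h1
        omega
      · rw [hoffd i hi]; exact hcoord u huG i
    exact hzsCE.2.2 (aux_dvd_mem K n I huG.1 hle2)
  have hcolon : ∀ r, r * monomial zs (1 : K) ∈ I ↔ r ∈ primeOf K n s' := by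
    intro r
    constructor
    · intro hr
      have hhit : ∀ m ∈ r.support, ∃ i ∈ s', 1 ≤ m i := by
        intro m hm
        by_contra hno
        push_neg at hno
        have hy : ∀ i ∈ s', m i = 0 := fun i hi => by have := hno i hi; omega
        have hsupp : m + zs ∈ (r * monomial zs (1 : K)).support := by
          rw [MvPolynomial.mem_support_iff, MvPolynomial.coeff_mul_monomial, mul_one]
          exact MvPolynomial.mem_support_iff.mp hm
        obtain ⟨u, huG, hule⟩ := aux_supp_subset K n hI.1 hr (m + zs) hsupp
        have hmem2 : monomial (zs + m) (1 : K) ∈ I :=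
          aux_dvd_mem K n I huG.1 (hule.trans (by rw [add_comm]))
        exact hoff m hy hmem2
      rw [← MvPolynomial.support_sum_monomial_coeff r]
      refine Ideal.sum_mem _ fun m hm => ?_
      obtain ⟨i, hi, hmi⟩ := hhit m hm
      have heq : (monomial m (MvPolynomial.coeff m r) : MvPolynomial (Fin n) K)
          = monomial (m - Finsupp.single i 1) (MvPolynomial.coeff m r)
            * MvPolynomial.X i := by
        rw [show (MvPolynomial.X i : MvPolynomial (Fin n) K)
            = monomial (Finsupp.single i 1) 1 from rfl,
          MvPolynomial.monomial_mul, tsub_add_cancel_of_le (Finsupp.single_le_iff.mpr hmi),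
          mul_one]
      rw [heq]
      exact Ideal.mul_mem_left _ _ (Ideal.subset_span ⟨i, hi, rfl⟩)
    · intro hr
      have hsub : primeOf K n s' ≤ Submodule.colon I (Ideal.span {monomial zs (1 : K)}) := by
        rw [primeOf, Ideal.span_le]
        rintro x ⟨i, hi, rfl⟩
        rw [SetLike.mem_coe, Ideal.mem_colon_span_singleton]
        have heq2 : MvPolynomial.X i * monomial zs (1 : K)
            = monomial (zs + Finsupp.single i 1) (1 : K) := by
          rw [show (MvPolynomial.X i : MvPolynomial (Fin n) K)
              = monomial (Finsupp.single i 1) 1 from rfl,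
            MvPolynomial.monomial_mul, one_mul, add_comm]
        rw [heq2]
        exact hplus i (Finset.mem_coe.mp hi)
      have h2 := hsub hr
      rwa [Ideal.mem_colon_span_singleton] at h2
  have hass := aux_assoc K n I zs s' hcolon
  have hcons : A s' ≤ ∑ j ∈ s', zs j := hzsCE.2.1 s' hass
  have hwit : ∀ i ∈ s', ∃ w ∈ minGens K n I, ∀ j, w j ≤ zs j + Finsupp.single i 1 j := by
    intro i hi
    obtain ⟨w, hwG, hwle⟩ := aux_exists_minGen_le K n I (hplus i hi)
    refine ⟨w, hwG, fun j => ?_⟩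
    have := Finsupp.le_def.mp hwle j
    rwa [show ((zs + Finsupp.single i 1 : Fin n →₀ ℕ)) j
        = zs j + Finsupp.single i 1 j from Finsupp.add_apply _ _ _] at this
  obtain ⟨u0, hu0G, hu0⟩ := hAmem s'
  obtain ⟨u, huG, hule⟩ := aux_core hI.2.2 s' zs (A s')
    (hAle s') ⟨u0, hu0G, hu0⟩ hcons hwit
  have hle2 : u ≤ zs := Finsupp.le_def.mpr fun i => by
    by_cases hi : i ∈ s'
    · exact hule i hi
    · rw [hoffd i hi]; exact hcoord u huG i
  exact hzsCE.2.2 (aux_dvd_mem K n I huG.1 hle2)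

end Stmt10Aux

/-- Herzog–Vladoiu: For a polymatroidal ideal `I` whose associated
primes are monomial primes, the primary components are powers of the associated
primes: `I = ⋂ p_i^{a_i}`. -/
theorem stmt10 {K : Type*} [Field K] {n : ℕ} (hn : 0 < n)
    (I : Ideal (MvPolynomial (Fin n) K)) (d : ℕ) (hI : IsPolymatroidal K n I d)
    (hmono : ∀ p ∈ associatedPrimes (MvPolynomial (Fin n) K)
        (MvPolynomial (Fin n) K ⧸ I),
      ∃ s : Finset (Fin n), p = primeOf K n s) :
    ∃ a : Ideal (MvPolynomial (Fin n) K) → ℕ,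
      I = ⨅ p ∈ associatedPrimes (MvPolynomial (Fin n) K)
        (MvPolynomial (Fin n) K ⧸ I), p ^ a p := by
  classical
  by_cases htop : I = ⊤
  · refine ⟨fun _ => 0, ?_⟩
    have hsub : Subsingleton (MvPolynomial (Fin n) K ⧸ I) :=
      Ideal.Quotient.subsingleton_iff.mpr htop
    rw [associatedPrimes.eq_empty_of_subsingleton, htop]
    simp
  by_cases hGe : (minGens K n I).Nonempty
  · -- main case
    refine ⟨fun p => if h : ∃ s : Finset (Fin n), p = primeOf K n s then
      sInf ((fun u => ∑ j ∈ h.choose, u j) '' minGens K n I) else 0, ?_⟩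
    apply le_antisymm
    · refine le_iInf fun p => le_iInf fun hp => ?_
      have h := hmono p hp
      simp only [dif_pos h]
      obtain ⟨s0, hs0⟩ : ∃ s0, s0 = h.choose := ⟨_, rfl⟩
      rw [← hs0]
      have hps : p = primeOf K n s0 := by rw [hs0]; exact h.choose_spec
      rw [hps, aux_pow_primeOf]
      obtain ⟨S, hS⟩ := hI.1
      conv_lhs => rw [hS]
      rw [Ideal.span_le]
      rintro x ⟨m, hmS, rfl⟩
      have hmI : monomial m (1 : K) ∈ I := by
        rw [hS]; exact Ideal.subset_span ⟨m, hmS, rfl⟩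
      obtain ⟨u, huG, hule⟩ := aux_exists_minGen_le K n I hmI
      refine Ideal.subset_span ⟨m, ?_, rfl⟩
      have h1 : sInf ((fun u => ∑ j ∈ s0, u j) '' minGens K n I)
          ≤ ∑ j ∈ s0, u j := Nat.sInf_le ⟨u, huG, rfl⟩
      have h2 : ∑ j ∈ s0, u j ≤ ∑ j ∈ s0, m j :=
        Finset.sum_le_sum fun j _ => Finsupp.le_def.mp hule j
      exact le_trans h1 h2
    · intro f hf
      apply aux_mem_of_supp K n I
      intro w hw
      apply aux_claimM K n I d hI hGe
      intro s hs
      have hex2 : ∃ t : Finset (Fin n), primeOf K n s = primeOf K n t := ⟨s, rfl⟩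
      have h1 : f ∈ (primeOf K n s) ^ (if h : ∃ t : Finset (Fin n),
          primeOf K n s = primeOf K n t then
            sInf ((fun u => ∑ j ∈ h.choose, u j) '' minGens K n I) else 0) := by
        have h2 := (Submodule.mem_iInf _).mp hf (primeOf K n s)
        exact (Submodule.mem_iInf _).mp h2 hs
      rw [dif_pos hex2] at h1
      have hts : hex2.choose = s := (aux_primeOf_inj K n hex2.choose_spec.symm)
      rw [hts] at h1
      rw [aux_pow_primeOf] at h1
      obtain ⟨m, hm, hle⟩ := (aux_mem_span_iff K n _ f).mp h1 w hw
      exact le_trans hm (Finset.sum_le_sum fun j _ => Finsupp.le_def.mp hle j)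
  · -- I = ⊥
    have hbot : I = ⊥ := by
      rw [eq_bot_iff]
      intro g hg
      rw [Submodule.mem_bot]
      by_contra hg0
      obtain ⟨w, hw⟩ := MvPolynomial.support_nonempty.mpr hg0
      obtain ⟨u, hu, _⟩ := aux_supp_subset K n hI.1 hg w hw
      exact hGe ⟨u, hu⟩
    refine ⟨fun _ => 1, ?_⟩
    rw [hbot, associatedPrimes.eq_singleton_of_isPrimary (Ideal.bot_prime.isPrimary),
      Ideal.radical_bot_of_noZeroDivisors]
    simp
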